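/- arXiv:2108.11241 — 5 statements merged into one kernel-verified Lean document; each statement's English description precedes it below -/
import Mathlib

section
/- Let A be an integral domain with field of fractions F. The map sending the class of a unimodular row (a,b) to the point a/b of the projective line P¹(F) is a well-defined injection from the vertex set of Γ(A) into P¹(F), and its image is exactly the set of Bézout points, i.e. those points of P¹(F) of the form a/b where (a,b) ∈ A² is nonzero and the ideal generated by a and b is principal. -/
open Matrix

/-- A row `(a,b) ∈ A²` is unimodular if `∃ r s, r*a + s*b = 1`. -/
def IsUnimod {A : Type*} [CommRing A] (v : Fin 2 → A) : Prop :=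
  ∃ r s : A, r * v 0 + s * v 1 = 1

/-- Unimodular rows of length 2. -/
abbrev UnimodRow (A : Type*) [CommRing A] := {v : Fin 2 → A // IsUnimod v}

/-- Two unimodular rows are equivalent if they differ by multiplication by a unit. -/
instance vertexSetoid (A : Type*) [CommRing A] : Setoid (UnimodRow A) where
  r v w := ∃ u : Aˣ, (u : A) • v.1 = w.1
  iseqv := by
    refine ⟨fun v => ⟨1, by simp⟩, ?_, ?_⟩
    · rintro v w ⟨u, h⟩
      exact ⟨u⁻¹, by rw [← h, smul_smul, Units.inv_mul, one_smul]⟩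
    · rintro v w z ⟨u, h⟩ ⟨u', h'⟩
      exact ⟨u' * u, by rw [← h', ← h, smul_smul, ← Units.val_mul]⟩

/-- The vertices of the graph Γ(A): unimodular rows up to multiplication by a unit. -/
def Vertex (A : Type*) [CommRing A] := Quotient (vertexSetoid A)

/-- The graph Γ(A). -/
def GammaGraph (A : Type*) [CommRing A] : SimpleGraph (Vertex A) where
  Adj x y := x ≠ y ∧ ∃ v w : UnimodRow A, x = ⟦v⟧ ∧ y = ⟦w⟧ ∧
    IsUnit (v.1 0 * w.1 1 - v.1 1 * w.1 0)
  symm := ⟨by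
    rintro x y ⟨hne, v, w, hx, hy, hd⟩
    refine ⟨hne.symm, w, v, hy, hx, ?_⟩
    have h : w.1 0 * v.1 1 - w.1 1 * v.1 0 = -(v.1 0 * w.1 1 - v.1 1 * w.1 0) := by ring
    rw [h]
    exact hd.neg⟩
  loopless := ⟨fun x h => h.1 rfl⟩

theorem isUnimod_vecMul {A : Type*} [CommRing A] {v : Fin 2 → A} (h : IsUnimod v)
    (M : GL (Fin 2) A) : IsUnimod (vecMul v (M : Matrix (Fin 2) (Fin 2) A)) := by
  obtain ⟨r, s, hrs⟩ := h
  set w : Fin 2 → A := ((M⁻¹ : GL (Fin 2) A) : Matrix (Fin 2) (Fin 2) A) *ᵥ ![r, s] with hw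
  refine ⟨w 0, w 1, ?_⟩
  have h1 : vecMul v (M : Matrix (Fin 2) (Fin 2) A) ⬝ᵥ w = v ⬝ᵥ ![r, s] := by
    rw [hw, ← dotProduct_mulVec, mulVec_mulVec, Units.mul_inv, one_mulVec]
  simp only [dotProduct, Fin.sum_univ_two] at h1
  simp only [Matrix.cons_val_zero, Matrix.cons_val_one, Matrix.head_cons] at h1
  linear_combination h1 + hrs

/-- The right action of GL₂(A) on the vertices of Γ(A). -/
def vertexMul {A : Type*} [CommRing A] (x : Vertex A) (M : GL (Fin 2) A) : Vertex A :=
  Quotient.map (fun v => ⟨vecMul v.1 (M : Matrix (Fin 2) (Fin 2) A), isUnimod_vecMul v.2 M⟩)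
    (by
      rintro v w ⟨u, h⟩
      refine ⟨u, ?_⟩
      show (u : A) • (vecMul v.1 (M : Matrix (Fin 2) (Fin 2) A)) =
        vecMul w.1 (M : Matrix (Fin 2) (Fin 2) A)
      rw [← h, Matrix.smul_vecMul]) x

/-- The vertex ∞ = [(1,0)]. -/
def vInf (A : Type*) [CommRing A] : Vertex A := ⟦⟨![1, 0], ⟨1, 0, by norm_num⟩⟩⟧

/-- The vertex 0 = [(0,1)]. -/
def vZero (A : Type*) [CommRing A] : Vertex A := ⟦⟨![0, 1], ⟨0, 1, by norm_num⟩⟩⟧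

/-- The vertex 1 = [(1,1)]. -/
def vOne (A : Type*) [CommRing A] : Vertex A := ⟦⟨![1, 1], ⟨1, 0, by norm_num⟩⟩⟧

/-- A point of P¹(F) is an (A-)Bézout point if it is of the form a/b = [a : b] for some
nonzero pair (a,b) ∈ A² generating a principal ideal. -/
def IsBezoutPoint (A : Type*) (F : Type*) [CommRing A] [Field F] [Algebra A F]
    (x : Projectivization F (Fin 2 → F)) : Prop :=
  ∃ a b : A, ¬(a = 0 ∧ b = 0) ∧ (Ideal.span {a, b} : Ideal A).IsPrincipal ∧
    ∃ hv : (![algebraMap A F a, algebraMap A F b] : Fin 2 → F) ≠ 0,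
      x = Projectivization.mk F ![algebraMap A F a, algebraMap A F b] hv


section Aux

variable {A : Type*} [CommRing A] [IsDomain A] {F : Type*} [Field F] [Algebra A F]
  [IsFractionRing A F]

lemma vec_ne_zero (v : UnimodRow A) :
    (![algebraMap A F (v.1 0), algebraMap A F (v.1 1)] : Fin 2 → F) ≠ 0 := by
  intro h
  obtain ⟨r, s, hrs⟩ := v.2
  have h0 : algebraMap A F (v.1 0) = 0 := congrFun h 0
  have h1 : algebraMap A F (v.1 1) = 0 := congrFun h 1
  have inj := IsFractionRing.injective A F
  have hv0 : v.1 0 = 0 := inj (by simpa using h0)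
  have hv1 : v.1 1 = 0 := inj (by simpa using h1)
  rw [hv0, hv1] at hrs
  simp at hrs

lemma smul_vec (c : F) (x y : F) : c • (![x, y] : Fin 2 → F) = ![c * x, c * y] := by
  funext i
  fin_cases i <;> simp

noncomputable def theMap : Vertex A → Projectivization F (Fin 2 → F) :=
  Quotient.lift
    (fun v : UnimodRow A =>
      Projectivization.mk F ![algebraMap A F (v.1 0), algebraMap A F (v.1 1)] (vec_ne_zero v))
    (by
      rintro v w ⟨u, h⟩
      refine (Projectivization.mk_eq_mk_iff F _ _ _ _).mpr ?_
      refine ⟨Units.map (algebraMap A F : A →* F) u⁻¹, ?_⟩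
      have h0 : (u : A) * v.1 0 = w.1 0 := congrFun h 0
      have h1 : (u : A) * v.1 1 = w.1 1 := congrFun h 1
      rw [Units.smul_def, Units.coe_map]
      show (algebraMap A F ((u⁻¹ : Aˣ) : A)) • _ = _
      rw [smul_vec, ← _root_.map_mul, ← _root_.map_mul, ← h0, ← h1,
        ← mul_assoc, ← mul_assoc, Units.inv_mul, one_mul, one_mul])

end Aux

/-- Let A be an integral domain with field of fractions F.  The map sending
the class of a unimodular row (a,b) to a/b ∈ P¹(F) is a well-defined injection from the
vertex set of Γ(A) into P¹(F), whose image is exactly the set of Bézout points. -/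
theorem stmt0 (A : Type*) [CommRing A] [IsDomain A] (F : Type*) [Field F] [Algebra A F]
    [IsFractionRing A F] :
    ∃ f : Vertex A → Projectivization F (Fin 2 → F),
      (∀ v : UnimodRow A,
        ∃ hv : (![algebraMap A F (v.1 0), algebraMap A F (v.1 1)] : Fin 2 → F) ≠ 0,
          f ⟦v⟧ = Projectivization.mk F ![algebraMap A F (v.1 0), algebraMap A F (v.1 1)] hv) ∧
      Function.Injective f ∧
      Set.range f = {x | IsBezoutPoint A F x} := by
  have inj := IsFractionRing.injective A F
  refine ⟨theMap, fun v => ⟨vec_ne_zero v, rfl⟩, ?_, ?_⟩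
  · -- injectivity
    intro x y
    induction x using Quotient.inductionOn with | h v =>
    induction y using Quotient.inductionOn with | h w =>
    intro hxy
    obtain ⟨c, hc⟩ :=
      (Projectivization.mk_eq_mk_iff F _ _ (vec_ne_zero v) (vec_ne_zero w)).mp hxy
    obtain ⟨p, q, hq, hpq⟩ := IsFractionRing.div_surjective (A := A) (c : F)
    have hq0 : q ≠ 0 := nonZeroDivisors.ne_zero hq
    have hqF : algebraMap A F q ≠ 0 := fun h => hq0 (inj (by simpa using h))
    have hp0 : p ≠ 0 := by
      intro h
      rw [h, map_zero, zero_div] at hpq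
      exact c.ne_zero hpq.symm
    have hc' : (c : F) • (![algebraMap A F (w.1 0), algebraMap A F (w.1 1)] : Fin 2 → F)
        = ![algebraMap A F (v.1 0), algebraMap A F (v.1 1)] := hc
    have e0 : (c : F) * algebraMap A F (w.1 0) = algebraMap A F (v.1 0) := by
      have := congrFun hc' 0; simpa using this
    have e1 : (c : F) * algebraMap A F (w.1 1) = algebraMap A F (v.1 1) := by
      have := congrFun hc' 1; simpa using this
    rw [← hpq, div_mul_eq_mul_div, div_eq_iff hqF] at e0 e1
    have f0 : p * w.1 0 = v.1 0 * q := by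
      apply inj; rw [_root_.map_mul, _root_.map_mul]; exact e0
    have f1 : p * w.1 1 = v.1 1 * q := by
      apply inj; rw [_root_.map_mul, _root_.map_mul]; exact e1
    obtain ⟨r, s, hrs⟩ := v.2
    obtain ⟨r', s', hrs'⟩ := w.2
    set t : A := r * w.1 0 + s * w.1 1 with ht
    set t' : A := r' * v.1 0 + s' * v.1 1 with ht'
    have hqpt : q = p * t := by
      have h : p * t = q := by
        rw [ht]; linear_combination r * f0 + s * f1 + q * hrs
      exact h.symm
    have hpqt : p = q * t' := by
      have h : q * t' = p := by
        rw [ht']; linear_combination (-r') * f0 + (-s') * f1 + p * hrs'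
      exact h.symm
    have htt' : t' * t = 1 := by
      apply mul_left_cancel₀ hq0
      show q * (t' * t) = q * 1
      linear_combination (-t) * hpqt - hqpt
    have hu : IsUnit t := IsUnit.of_mul_eq_one t' (by rw [mul_comm]; exact htt')
    obtain ⟨u, hu⟩ := hu
    apply Quotient.sound
    refine ⟨u, ?_⟩
    funext i
    show (u : A) * v.1 i = w.1 i
    rw [hu]
    apply mul_left_cancel₀ hp0
    fin_cases i
    · show p * (t * v.1 0) = p * w.1 0
      linear_combination (-(v.1 0)) * hqpt - f0
    · show p * (t * v.1 1) = p * w.1 1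
      linear_combination (-(v.1 1)) * hqpt - f1
  · -- range
    ext x
    simp only [Set.mem_range, Set.mem_setOf_eq]
    constructor
    · rintro ⟨y, rfl⟩
      induction y using Quotient.inductionOn with | h v =>
      obtain ⟨r, s, hrs⟩ := v.2
      refine ⟨v.1 0, v.1 1, ?_, ?_, vec_ne_zero v, rfl⟩
      · rintro ⟨h0, h1⟩
        rw [h0, h1] at hrs
        simp at hrs
      · refine ⟨1, ?_⟩
        have : (Ideal.span {v.1 0, v.1 1} : Ideal A) = ⊤ := by
          rw [Ideal.eq_top_iff_one]
          exact Ideal.mem_span_pair.mpr ⟨r, s, hrs⟩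
        rw [this]
        exact (Ideal.span_singleton_one).symm
    · rintro ⟨a, b, hab, ⟨d, hd⟩, hv, rfl⟩
      have ha : a ∈ Ideal.span ({a, b} : Set A) :=
        Ideal.subset_span (by simp)
      have hb : b ∈ Ideal.span ({a, b} : Set A) :=
        Ideal.subset_span (by simp)
      have hd0 : d ≠ 0 := by
        rintro rfl
        rw [hd] at ha hb
        simp only [Submodule.span_zero_singleton, Submodule.mem_bot] at ha hb
        exact hab ⟨ha, hb⟩
      obtain ⟨a', ha'⟩ : d ∣ a := Ideal.mem_span_singleton.mp (by rw [hd] at ha; exact ha)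
      obtain ⟨b', hb'⟩ : d ∣ b := Ideal.mem_span_singleton.mp (by rw [hd] at hb; exact hb)
      have hdm : d ∈ Ideal.span ({a, b} : Set A) := by
        rw [hd]; exact Ideal.subset_span (by simp)
      obtain ⟨x, y, hxy⟩ := Ideal.mem_span_pair.mp hdm
      have huni : x * a' + y * b' = 1 := by
        apply mul_left_cancel₀ hd0
        rw [mul_one]
        calc d * (x * a' + y * b') = x * (d * a') + y * (d * b') := by ring
          _ = x * a + y * b := by rw [← ha', ← hb']
          _ = d := hxy
      set v : UnimodRow A := ⟨![a', b'], ⟨x, y, by simpa using huni⟩⟩ with hvdef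
      refine ⟨⟦v⟧, ?_⟩
      show Projectivization.mk F ![algebraMap A F (v.1 0), algebraMap A F (v.1 1)]
        (vec_ne_zero v) = _
      symm
      rw [Projectivization.mk_eq_mk_iff]
      have hdF : algebraMap A F d ≠ 0 := fun h => hd0 (inj (by simpa using h))
      refine ⟨Units.mk0 (algebraMap A F d) hdF, ?_⟩
      rw [Units.smul_def, Units.val_mk0]
      have h0 : v.1 0 = a' := rfl
      have h1 : v.1 1 = b' := rfl
      rw [h0, h1, smul_vec, ← _root_.map_mul, ← _root_.map_mul, ← ha', ← hb']
end

section
/- Let A be a commutative ring. Then GL₂(A) acts transitively on the right on the set of ordered 3-cliques of Γ(A), i.e. ordered triples of pairwise adjacent vertices, and the stabilizer of the ordered 3-clique (∞, 0, 1) is the group of invertible scalar matrices in GL₂(A). -/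
open Matrix

section Stmt2Aux

variable {A : Type*} [CommRing A]

/-- 2x2 determinant of two rows. -/
private def det2 (v w : Fin 2 → A) : A := v 0 * w 1 - v 1 * w 0

private lemma vecMul_apply' (v : Fin 2 → A) (M : Matrix (Fin 2) (Fin 2) A) (j : Fin 2) :
    vecMul v M j = v 0 * M 0 j + v 1 * M 1 j := by
  simp [vecMul, dotProduct, Fin.sum_univ_two]

private lemma adj_det {v w : UnimodRow A} (h : (GammaGraph A).Adj ⟦v⟧ ⟦w⟧) :
    IsUnit (det2 v.1 w.1) := by
  obtain ⟨-, v', w', hx, hy, hd⟩ := h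
  obtain ⟨u, hu⟩ := Quotient.exact hx
  obtain ⟨u', hu'⟩ := Quotient.exact hy
  have key : v'.1 0 * w'.1 1 - v'.1 1 * w'.1 0 = ((u * u' : Aˣ) : A) * det2 v.1 w.1 := by
    rw [← hu, ← hu']
    simp only [Pi.smul_apply, smul_eq_mul, Units.val_mul, det2]
    ring
  rw [key] at hd
  exact (Units.isUnit_units_mul (u * u') _).mp hd

private lemma vertexMul_mk (v : UnimodRow A) (M : GL (Fin 2) A) :
    vertexMul ⟦v⟧ M = ⟦⟨vecMul v.1 (M : Matrix (Fin 2) (Fin 2) A), isUnimod_vecMul v.2 M⟩⟧ :=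
  rfl

private lemma vertexMul_vertexMul (x : Vertex A) (M N : GL (Fin 2) A) :
    vertexMul (vertexMul x M) N = vertexMul x (M * N) := by
  obtain ⟨v, rfl⟩ := Quotient.exists_rep x
  rw [vertexMul_mk, vertexMul_mk, vertexMul_mk]
  apply Quotient.sound
  refine ⟨1, ?_⟩
  show ((1 : Aˣ) : A) • vecMul (vecMul v.1 (M : Matrix (Fin 2) (Fin 2) A))
      (N : Matrix (Fin 2) (Fin 2) A) =
    vecMul v.1 ((M * N : GL (Fin 2) A) : Matrix (Fin 2) (Fin 2) A)
  rw [Units.val_one, one_smul, vecMul_vecMul, Units.val_mul]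

/-- Any triangle is the image of the standard triangle. -/
private lemma exists_map {x y z : Vertex A} (hxy : (GammaGraph A).Adj x y)
    (hxz : (GammaGraph A).Adj x z) (hyz : (GammaGraph A).Adj y z) :
    ∃ N : GL (Fin 2) A, vertexMul (vInf A) N = x ∧ vertexMul (vZero A) N = y ∧
      vertexMul (vOne A) N = z := by
  obtain ⟨v, rfl⟩ := Quotient.exists_rep x
  obtain ⟨w, rfl⟩ := Quotient.exists_rep y
  obtain ⟨t, rfl⟩ := Quotient.exists_rep z
  have hd1 : IsUnit (det2 v.1 w.1) := adj_det hxy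
  have hd2 : IsUnit (det2 v.1 t.1) := adj_det hxz
  have hd3 : IsUnit (det2 w.1 t.1) := adj_det hyz
  obtain ⟨c, hc⟩ := hd1.exists_left_inv
  simp only [det2] at hc hd2 hd3
  have hcu : IsUnit c := IsUnit.of_mul_eq_one (a := c) _ hc
  set a : A := (t.1 0 * w.1 1 - t.1 1 * w.1 0) * c with ha
  set b : A := (v.1 0 * t.1 1 - v.1 1 * t.1 0) * c with hb
  have hua : IsUnit a := by
    refine IsUnit.mul ?_ hcu
    have h' : t.1 0 * w.1 1 - t.1 1 * w.1 0 = -(w.1 0 * t.1 1 - w.1 1 * t.1 0) := by ring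
    rw [h']; exact hd3.neg
  have hub : IsUnit b := hd2.mul hcu
  have ht0 : a * v.1 0 + b * w.1 0 = t.1 0 := by
    rw [ha, hb]; linear_combination t.1 0 * hc
  have ht1 : a * v.1 1 + b * w.1 1 = t.1 1 := by
    rw [ha, hb]; linear_combination t.1 1 * hc
  set M : Matrix (Fin 2) (Fin 2) A := !![a * v.1 0, a * v.1 1; b * w.1 0, b * w.1 1] with hM
  have hdet : IsUnit M.det := by
    have : M.det = (a * b) * (v.1 0 * w.1 1 - v.1 1 * w.1 0) := by
      rw [hM, Matrix.det_fin_two_of]; ring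
    rw [this]
    exact (hua.mul hub).mul hd1
  set N : GL (Fin 2) A := ((Matrix.isUnit_iff_isUnit_det M).mpr hdet).unit with hN
  have hNM : (N : Matrix (Fin 2) (Fin 2) A) = M := IsUnit.unit_spec _
  have hM00 : M 0 0 = a * v.1 0 := by simp [hM]
  have hM01 : M 0 1 = a * v.1 1 := by simp [hM]
  have hM10 : M 1 0 = b * w.1 0 := by simp [hM]
  have hM11 : M 1 1 = b * w.1 1 := by simp [hM]
  refine ⟨N, ?_, ?_, ?_⟩
  · rw [vInf, vertexMul_mk]
    apply Quotient.sound
    refine ⟨hua.unit⁻¹, ?_⟩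
    show (↑hua.unit⁻¹ : A) • vecMul ![1, 0] (N : Matrix (Fin 2) (Fin 2) A) = v.1
    have hrow : vecMul ![1, 0] (N : Matrix (Fin 2) (Fin 2) A) = a • v.1 := by
      funext j
      rw [hNM, vecMul_apply']
      fin_cases j <;>
        simp [hM00, hM01, Matrix.cons_val_zero, Matrix.cons_val_one, Matrix.head_cons]
    rw [hrow, smul_smul, IsUnit.val_inv_mul, one_smul]
  · rw [vZero, vertexMul_mk]
    apply Quotient.sound
    refine ⟨hub.unit⁻¹, ?_⟩
    show (↑hub.unit⁻¹ : A) • vecMul ![0, 1] (N : Matrix (Fin 2) (Fin 2) A) = w.1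
    have hrow : vecMul ![0, 1] (N : Matrix (Fin 2) (Fin 2) A) = b • w.1 := by
      funext j
      rw [hNM, vecMul_apply']
      fin_cases j <;>
        simp [hM10, hM11, Matrix.cons_val_zero, Matrix.cons_val_one, Matrix.head_cons]
    rw [hrow, smul_smul, IsUnit.val_inv_mul, one_smul]
  · rw [vOne, vertexMul_mk]
    apply Quotient.sound
    refine ⟨1, ?_⟩
    show (1 : A) • vecMul ![1, 1] (N : Matrix (Fin 2) (Fin 2) A) = t.1
    rw [one_smul]
    funext j
    rw [hNM, vecMul_apply']
    fin_cases j
    · simpa [hM00, hM10] using ht0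
    · simpa [hM01, hM11] using ht1

private lemma fixed_of_scalar {M : GL (Fin 2) A} {u : Aˣ}
    (h : (M : Matrix (Fin 2) (Fin 2) A) = (u : A) • (1 : Matrix (Fin 2) (Fin 2) A))
    (x : Vertex A) : vertexMul x M = x := by
  obtain ⟨v, rfl⟩ := Quotient.exists_rep x
  rw [vertexMul_mk]
  apply Quotient.sound
  refine ⟨u⁻¹, ?_⟩
  show (↑u⁻¹ : A) • vecMul v.1 (M : Matrix (Fin 2) (Fin 2) A) = v.1
  have hrow : vecMul v.1 (M : Matrix (Fin 2) (Fin 2) A) = (u : A) • v.1 := by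
    funext j
    rw [h, vecMul_apply']
    fin_cases j <;> simp [Matrix.one_apply] <;> ring
  rw [hrow, smul_smul, Units.inv_mul, one_smul]

end Stmt2Aux

/-- GL₂(A) acts transitively on ordered 3-cliques of Γ(A), and the stabilizer
of the ordered 3-clique (∞, 0, 1) is the group of invertible scalar matrices. -/
theorem stmt2 (A : Type*) [CommRing A] :
    (∀ x y z x' y' z' : Vertex A,
      (GammaGraph A).Adj x y → (GammaGraph A).Adj x z → (GammaGraph A).Adj y z →
      (GammaGraph A).Adj x' y' → (GammaGraph A).Adj x' z' → (GammaGraph A).Adj y' z' →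
      ∃ M : GL (Fin 2) A,
        vertexMul x M = x' ∧ vertexMul y M = y' ∧ vertexMul z M = z') ∧
    (∀ M : GL (Fin 2) A,
      (vertexMul (vInf A) M = vInf A ∧ vertexMul (vZero A) M = vZero A ∧
        vertexMul (vOne A) M = vOne A) ↔
      ∃ u : Aˣ, (M : Matrix (Fin 2) (Fin 2) A) = (u : A) • (1 : Matrix (Fin 2) (Fin 2) A)) := by
  constructor
  · intro x y z x' y' z' h1 h2 h3 h1' h2' h3'
    obtain ⟨N, hN1, hN2, hN3⟩ := exists_map h1 h2 h3
    obtain ⟨N', hN1', hN2', hN3'⟩ := exists_map h1' h2' h3'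
    refine ⟨N⁻¹ * N', ?_, ?_, ?_⟩
    · rw [← hN1, vertexMul_vertexMul, mul_inv_cancel_left, hN1']
    · rw [← hN2, vertexMul_vertexMul, mul_inv_cancel_left, hN2']
    · rw [← hN3, vertexMul_vertexMul, mul_inv_cancel_left, hN3']
  · intro M
    constructor
    · rintro ⟨hInf, hZero, hOne⟩
      set M' : Matrix (Fin 2) (Fin 2) A := (M : Matrix (Fin 2) (Fin 2) A) with hM'
      rw [vInf, vertexMul_mk] at hInf
      rw [vZero, vertexMul_mk] at hZero
      rw [vOne, vertexMul_mk] at hOne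
      obtain ⟨u, hu⟩ := Quotient.exact hInf
      obtain ⟨u', hu'⟩ := Quotient.exact hZero
      obtain ⟨u'', hu''⟩ := Quotient.exact hOne
      have e1 : (u : A) * M' 0 0 = 1 := by
        have := congrFun hu 0
        simpa [vecMul_apply'] using this
      have e2 : (u : A) * M' 0 1 = 0 := by
        have := congrFun hu 1
        simpa [vecMul_apply'] using this
      have e3 : (u' : A) * M' 1 0 = 0 := by
        have := congrFun hu' 0
        simpa [vecMul_apply'] using this
      have e4 : (u' : A) * M' 1 1 = 1 := by
        have := congrFun hu' 1
        simpa [vecMul_apply'] using this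
      have e5 : (u'' : A) * (M' 0 0 + M' 1 0) = 1 := by
        have := congrFun hu'' 0
        simpa [vecMul_apply'] using this
      have e6 : (u'' : A) * (M' 0 1 + M' 1 1) = 1 := by
        have := congrFun hu'' 1
        simpa [vecMul_apply'] using this
      have h01 : M' 0 1 = 0 := by
        have : M' 0 1 = ((↑u⁻¹ : A) * (u : A)) * M' 0 1 := by
          rw [Units.inv_mul, one_mul]
        rw [this, mul_assoc, e2, mul_zero]
      have h10 : M' 1 0 = 0 := by
        have : M' 1 0 = ((↑u'⁻¹ : A) * (u' : A)) * M' 1 0 := by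
          rw [Units.inv_mul, one_mul]
        rw [this, mul_assoc, e3, mul_zero]
      have e5' : (u'' : A) * M' 0 0 = 1 := by rw [← e5, h10, add_zero]
      have e6' : (u'' : A) * M' 1 1 = 1 := by rw [← e6, h01, zero_add]
      have hdiag : M' 1 1 = M' 0 0 := by
        linear_combination M' 0 0 * e6' - M' 1 1 * e5'
      refine ⟨⟨M' 0 0, (u'' : A), by rw [mul_comm]; exact e5', e5'⟩, ?_⟩
      show M' = M' 0 0 • (1 : Matrix (Fin 2) (Fin 2) A)
      ext i j
      fin_cases i <;> fin_cases j <;>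
        simp [Matrix.one_apply, h01, h10, hdiag]
    · rintro ⟨u, hMu⟩
      exact ⟨fixed_of_scalar hMu _, fixed_of_scalar hMu _, fixed_of_scalar hMu _⟩
end

section
/- Let A be a commutative ring and let a, b ∈ A² be unimodular rows whose classes [a], [b] form an edge of Γ(A). Then the map from the unit group A^× to the set of vertices [c] such that {[a],[b],[c]} is a 3-clique of Γ(A), given by u ↦ [a + ub] (the class of the row a + ub), is a bijection. -/
open Matrix

private lemma isUnimod_of_det' {A : Type*} [CommRing A] (x w : Fin 2 → A)
    (h : IsUnit (x 0 * w 1 - x 1 * w 0)) : IsUnimod w := by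
  obtain ⟨e, he⟩ := h
  refine ⟨(↑e⁻¹ : A) * (-(x 1)), (↑e⁻¹ : A) * x 0, ?_⟩
  have h2 : (↑e⁻¹ : A) * ↑e = 1 := e.inv_mul
  linear_combination (-(↑e⁻¹ : A)) * he + h2

private lemma det_unit_of_adj' {A : Type*} [CommRing A] {x y : UnimodRow A}
    (h : (GammaGraph A).Adj ⟦x⟧ ⟦y⟧) :
    IsUnit (x.1 0 * y.1 1 - x.1 1 * y.1 0) := by
  obtain ⟨hne, v, w, hv, hw, hd⟩ := h
  obtain ⟨u1, h1⟩ := Quotient.eq.mp hv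
  obtain ⟨u2, h2⟩ := Quotient.eq.mp hw
  have e0 : (↑u1 : A) * x.1 0 = v.1 0 := by simpa using congrFun h1 0
  have e1 : (↑u1 : A) * x.1 1 = v.1 1 := by simpa using congrFun h1 1
  have f0 : (↑u2 : A) * y.1 0 = w.1 0 := by simpa using congrFun h2 0
  have f1 : (↑u2 : A) * y.1 1 = w.1 1 := by simpa using congrFun h2 1
  have key : v.1 0 * w.1 1 - v.1 1 * w.1 0 =
      ↑(u1 * u2) * (x.1 0 * y.1 1 - x.1 1 * y.1 0) := by
    rw [Units.val_mul]
    linear_combination (-(w.1 1)) * e0 + w.1 0 * e1 -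
      ((↑u1 : A) * x.1 0) * f1 + ((↑u1 : A) * x.1 1) * f0
  rw [key] at hd
  exact (Units.isUnit_units_mul _ _).mp hd

private lemma adj_of_det' {A : Type*} [CommRing A] [Nontrivial A] {x y : UnimodRow A}
    (h : IsUnit (x.1 0 * y.1 1 - x.1 1 * y.1 0)) : (GammaGraph A).Adj ⟦x⟧ ⟦y⟧ := by
  show (⟦x⟧ : Vertex A) ≠ ⟦y⟧ ∧ ∃ v w : UnimodRow A, (⟦x⟧ : Vertex A) = ⟦v⟧ ∧
    (⟦y⟧ : Vertex A) = ⟦w⟧ ∧ IsUnit (v.1 0 * w.1 1 - v.1 1 * w.1 0)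
  refine ⟨?_, x, y, rfl, rfl, h⟩
  intro heq
  obtain ⟨u, hu⟩ := Quotient.eq.mp heq
  have e0 : (↑u : A) * x.1 0 = y.1 0 := by simpa using congrFun hu 0
  have e1 : (↑u : A) * x.1 1 = y.1 1 := by simpa using congrFun hu 1
  have hz : x.1 0 * y.1 1 - x.1 1 * y.1 0 = 0 := by
    rw [← e0, ← e1]; ring
  rw [hz] at h
  exact not_isUnit_zero h

/-- If [a], [b] form an edge of Γ(A), then u ↦ [a + u·b] is a bijection from
A^× onto the set of vertices [c] such that {[a],[b],[c]} is a 3-clique of Γ(A). -/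
theorem stmt3 (A : Type*) [CommRing A] (a b : UnimodRow A)
    (hab : (GammaGraph A).Adj ⟦a⟧ ⟦b⟧) :
    ∃ f : Aˣ → Vertex A,
      (∀ u : Aˣ, ∃ h : IsUnimod (a.1 + (u : A) • b.1),
        f u = ⟦(⟨a.1 + (u : A) • b.1, h⟩ : UnimodRow A)⟧) ∧
      Set.BijOn f Set.univ
        {c : Vertex A | (GammaGraph A).Adj ⟦a⟧ c ∧ (GammaGraph A).Adj ⟦b⟧ c} := by
  have hne := hab.1
  have hnt : Nontrivial A := by
    rcases subsingleton_or_nontrivial A with h | h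
    · have hr : a ≈ b := by
        show ∃ u : Aˣ, (u : A) • a.1 = b.1
        exact ⟨1, Subsingleton.elim _ _⟩
      exact absurd (Quotient.sound hr) hne
    · exact h
  obtain ⟨δ, hδ⟩ := det_unit_of_adj' hab
  have hdetc : ∀ u : Aˣ, a.1 0 * (a.1 + (u : A) • b.1) 1 - a.1 1 * (a.1 + (u : A) • b.1) 0
      = ↑(u * δ) := by
    intro u
    simp only [Pi.add_apply, Pi.smul_apply, smul_eq_mul, Units.val_mul]
    linear_combination (-(u : A)) * hδ
  have hdetb : ∀ u : Aˣ, b.1 0 * (a.1 + (u : A) • b.1) 1 - b.1 1 * (a.1 + (u : A) • b.1) 0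
      = ↑(-δ) := by
    intro u
    simp only [Pi.add_apply, Pi.smul_apply, smul_eq_mul, Units.val_neg]
    linear_combination hδ
  have hc : ∀ u : Aˣ, IsUnimod (a.1 + (u : A) • b.1) := fun u =>
    isUnimod_of_det' a.1 _ (by rw [hdetc u]; exact Units.isUnit _)
  refine ⟨fun u => ⟦⟨a.1 + (u : A) • b.1, hc u⟩⟧, fun u => ⟨hc u, rfl⟩, ?_, ?_, ?_⟩
  · -- MapsTo
    intro u _
    constructor
    · apply adj_of_det'
      show IsUnit (a.1 0 * (a.1 + (u : A) • b.1) 1 - a.1 1 * (a.1 + (u : A) • b.1) 0)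
      rw [hdetc u]; exact Units.isUnit _
    · apply adj_of_det'
      show IsUnit (b.1 0 * (a.1 + (u : A) • b.1) 1 - b.1 1 * (a.1 + (u : A) • b.1) 0)
      rw [hdetb u]; exact Units.isUnit _
  · -- InjOn
    intro u _ u' _ hfu
    obtain ⟨w, hw⟩ := Quotient.eq.mp hfu
    have e0 : (↑w : A) * (a.1 0 + ↑u * b.1 0) = a.1 0 + ↑u' * b.1 0 := by
      simpa using congrFun hw 0
    have e1 : (↑w : A) * (a.1 1 + ↑u * b.1 1) = a.1 1 + ↑u' * b.1 1 := by
      simpa using congrFun hw 1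
    have hw1 : (↑w : A) * ↑δ = 1 * ↑δ := by
      linear_combination (b.1 1) * e0 - (b.1 0) * e1 + ((↑w : A) - 1) * hδ
    have hw1' : (↑w : A) = 1 := δ.isUnit.mul_right_cancel hw1
    obtain ⟨r, s, hrs⟩ := b.2
    have : (↑u : A) = ↑u' := by
      rw [hw1', one_mul] at e0 e1
      linear_combination r * e0 + s * e1 - ((↑u : A) - ↑u') * hrs
    exact Units.ext this
  · -- SurjOn
    rintro c ⟨hac, hbc⟩
    obtain ⟨c, rfl⟩ := Quotient.exists_rep c
    obtain ⟨e1, he1⟩ := det_unit_of_adj' hac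
    obtain ⟨e2, he2⟩ := det_unit_of_adj' hbc
    refine ⟨-(e1 * e2⁻¹), Set.mem_univ _, ?_⟩
    apply Quotient.sound
    refine ⟨-(e2 * δ⁻¹), ?_⟩
    have hdi : (↑δ : A) * ↑δ⁻¹ = 1 := δ.mul_inv
    have hei : (↑e2 : A) * ↑e2⁻¹ = 1 := e2.mul_inv
    funext i
    fin_cases i
    · simp only [Pi.smul_apply, Pi.add_apply, smul_eq_mul, Units.val_neg, Units.val_mul, Fin.zero_eta, Fin.mk_one]
      linear_combination ((↑e1 : A) * ↑δ⁻¹ * b.1 0) * hei - ((↑δ⁻¹ : A) * a.1 0) * he2 +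
        ((↑δ⁻¹ : A) * b.1 0) * he1 - ((↑δ⁻¹ : A) * c.1 0) * hδ + (c.1 0) * hdi
    · simp only [Pi.smul_apply, Pi.add_apply, smul_eq_mul, Units.val_neg, Units.val_mul, Fin.zero_eta, Fin.mk_one]
      linear_combination ((↑e1 : A) * ↑δ⁻¹ * b.1 1) * hei - ((↑δ⁻¹ : A) * a.1 1) * he2 +
        ((↑δ⁻¹ : A) * b.1 1) * he1 - ((↑δ⁻¹ : A) * c.1 1) * hδ + (c.1 1) * hdi
end

section
/- Let A be a commutative ring. In the group C(A), with y(a) := ε(0)³ε(a) for a ∈ A, the following hold: (1) y(a)y(b) = y(a+b) for all a, b ∈ A; (2) h(u)⁻¹ y(a) h(u) = y(u²a) for every unit u of A and every a ∈ A. -/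
open Matrix

/-- The word `h(u) = ε(-u)ε(-u⁻¹)ε(-u)` in the free group on the symbols `ε(a)`, `a ∈ A`. -/
def hFree {A : Type*} [CommRing A] (u : Aˣ) : FreeGroup A :=
  FreeGroup.of (-(u : A)) * FreeGroup.of (-((u⁻¹ : Aˣ) : A)) * FreeGroup.of (-(u : A))

/-- The defining relations of Cohn's group C(A). -/
def CRels (A : Type*) [CommRing A] : Set (FreeGroup A) :=
  {x | ∃ u v : Aˣ, x = hFree u * hFree v * (hFree (u * v))⁻¹} ∪
  {x | ∃ a b : A, x = FreeGroup.of a * FreeGroup.of (0 : A) * FreeGroup.of b *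
      (hFree (-1) * FreeGroup.of (a + b))⁻¹} ∪
  {x | ∃ (u : Aˣ) (a : A), x = hFree u * FreeGroup.of a * hFree u *
      (FreeGroup.of ((u : A) ^ 2 * a))⁻¹}

/-- Cohn's group C(A), presented by generators ε(a), a ∈ A, and the three families of
relations h(u)h(v) = h(uv), ε(a)ε(0)ε(b) = h(-1)ε(a+b), h(u)ε(a)h(u) = ε(u²a). -/
abbrev CGroup (A : Type*) [CommRing A] := PresentedGroup (CRels A)

/-- The generator ε(a) of C(A). -/
def epsC {A : Type*} [CommRing A] (a : A) : CGroup A := PresentedGroup.of a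

/-- h(u) = ε(-u)ε(-u⁻¹)ε(-u) in C(A). -/
def hC {A : Type*} [CommRing A] (u : Aˣ) : CGroup A :=
  epsC (-(u : A)) * epsC (-((u⁻¹ : Aˣ) : A)) * epsC (-(u : A))

/-- y(a) = ε(0)³ε(a) in C(A). -/
def yC {A : Type*} [CommRing A] (a : A) : CGroup A := (epsC (0 : A)) ^ 3 * epsC a

/-- ȳ(a) = ε(-a)ε(0)³ in C(A). -/
def ybarC {A : Type*} [CommRing A] (a : A) : CGroup A := epsC (-a) * (epsC (0 : A)) ^ 3

/-- β(u,a) = h(u)y(ua) in C(A). -/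
def betaC {A : Type*} [CommRing A] (u : Aˣ) (a : A) : CGroup A := hC u * yC ((u : A) * a)

/-- E(a) = [[a,1],[-1,0]] as an element of SL₂. -/
def ESL {A : Type*} [CommRing A] (a : A) : Matrix.SpecialLinearGroup (Fin 2) A :=
  ⟨!![a, 1; -1, 0], by simp [Matrix.det_fin_two_of]⟩

/-- D(u) = diag(u, u⁻¹) as an element of SL₂. -/
def DSL {A : Type*} [CommRing A] (u : Aˣ) : Matrix.SpecialLinearGroup (Fin 2) A :=
  ⟨!![(u : A), 0; 0, ((u⁻¹ : Aˣ) : A)], by simp [Matrix.det_fin_two_of]⟩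

theorem ESL_h {A : Type*} [CommRing A] (u : Aˣ) :
    ESL (-(u : A)) * ESL (-((u⁻¹ : Aˣ) : A)) * ESL (-(u : A)) = DSL u := by
  apply Subtype.ext
  show (!![-(u:A), 1; -1, 0] * !![-((u⁻¹:Aˣ):A), 1; -1, 0]) * !![-(u:A), 1; -1, 0] = _
  ext i j
  fin_cases i <;> fin_cases j <;>
    simp [DSL, Matrix.mul_apply, Fin.sum_univ_two]

theorem DSL_mul {A : Type*} [CommRing A] (u v : Aˣ) : DSL u * DSL v = DSL (u * v) := by
  apply Subtype.ext
  show (!![(u:A), 0; 0, ((u⁻¹:Aˣ):A)] * !![(v:A), 0; 0, ((v⁻¹:Aˣ):A)]) = _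
  ext i j
  fin_cases i <;> fin_cases j <;>
    simp [DSL, Matrix.mul_apply, Fin.sum_univ_two, mul_comm]

theorem ESL_rel2 {A : Type*} [CommRing A] (a b : A) :
    ESL a * ESL (0 : A) * ESL b = DSL (-1) * ESL (a + b) := by
  apply Subtype.ext
  show (!![a, 1; -1, 0] * !![(0:A), 1; -1, 0]) * !![b, 1; -1, 0] =
    !![((-1 : Aˣ) : A), 0; 0, (((-1 : Aˣ)⁻¹ : Aˣ) : A)] * !![a + b, 1; -1, 0]
  ext i j
  fin_cases i <;> fin_cases j <;>
    simp [DSL, ESL, Matrix.mul_apply, Fin.sum_univ_two]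

theorem ESL_rel3 {A : Type*} [CommRing A] (u : Aˣ) (a : A) :
    DSL u * ESL a * DSL u = ESL ((u : A) ^ 2 * a) := by
  apply Subtype.ext
  show (!![(u:A), 0; 0, ((u⁻¹:Aˣ):A)] * !![a, 1; -1, 0]) * !![(u:A), 0; 0, ((u⁻¹:Aˣ):A)] = _
  ext i j
  fin_cases i <;> fin_cases j <;>
    simp [ESL, Matrix.mul_apply, Fin.sum_univ_two] <;> ring

theorem lift_hFree {A : Type*} [CommRing A] (u : Aˣ) :
    FreeGroup.lift (fun a : A => ESL a) (hFree u) = DSL u := by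
  simp only [hFree, _root_.map_mul, FreeGroup.lift_apply_of]
  exact ESL_h u

theorem CRels_liftable {A : Type*} [CommRing A] :
    ∀ r ∈ CRels A, FreeGroup.lift (fun a : A => ESL a) r = 1 := by
  rintro r ((⟨u, v, rfl⟩ | ⟨a, b, rfl⟩) | ⟨u, a, rfl⟩)
  · rw [_root_.map_mul, _root_.map_mul, map_inv, lift_hFree, lift_hFree, lift_hFree, DSL_mul,
      mul_inv_cancel]
  · simp only [_root_.map_mul, map_inv, FreeGroup.lift_apply_of, lift_hFree]
    rw [ESL_rel2, mul_inv_cancel]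
  · simp only [_root_.map_mul, map_inv, FreeGroup.lift_apply_of, lift_hFree]
    rw [ESL_rel3, mul_inv_cancel]

/-- The homomorphism ψ : C(A) → SL₂(A) with ψ(ε(a)) = E(a). -/
def psiC (A : Type*) [CommRing A] : CGroup A →* Matrix.SpecialLinearGroup (Fin 2) A :=
  PresentedGroup.toGroup CRels_liftable

@[simp] theorem psiC_epsC {A : Type*} [CommRing A] (a : A) : psiC A (epsC a) = ESL a :=
  PresentedGroup.toGroup.of _

section CohnLemmas

variable {A : Type*} [CommRing A]

/-- The quotient map from the free group to C(A). -/
def mkC : FreeGroup A →* CGroup A := QuotientGroup.mk' _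

lemma mkC_rel {r : FreeGroup A} (h : r ∈ CRels A) : mkC r = 1 :=
  (QuotientGroup.eq_one_iff r).2 (Subgroup.subset_normalClosure h)

lemma mkC_of (a : A) : mkC (FreeGroup.of a) = epsC a := rfl

lemma mkC_hFree (u : Aˣ) : mkC (hFree u) = hC u := by
  simp only [hFree, _root_.map_mul, mkC_of, hC]

lemma hC_mul (u v : Aˣ) : hC u * hC v = hC (u * v) := by
  have h := mkC_rel (A := A) (Or.inl (Or.inl ⟨u, v, rfl⟩))
  simpa only [_root_.map_mul, map_inv, mkC_hFree, mul_inv_eq_one] using h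

lemma R2 (a b : A) : epsC a * epsC (0 : A) * epsC b = hC (-1) * epsC (a + b) := by
  have h := mkC_rel (A := A) (Or.inl (Or.inr ⟨a, b, rfl⟩))
  simpa only [_root_.map_mul, map_inv, mkC_hFree, mkC_of, mul_inv_eq_one] using h

lemma R3 (u : Aˣ) (a : A) : hC u * epsC a * hC u = epsC ((u : A) ^ 2 * a) := by
  have h := mkC_rel (A := A) (Or.inr ⟨u, a, rfl⟩)
  simpa only [_root_.map_mul, map_inv, mkC_hFree, mkC_of, mul_inv_eq_one] using h

lemma hC_one : hC (1 : Aˣ) = 1 := by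
  have := hC_mul (1 : Aˣ) 1
  rw [mul_one] at this
  exact mul_right_cancel (by rw [this, one_mul])

lemma hC_inv (u : Aˣ) : (hC u)⁻¹ = hC u⁻¹ := by
  have : hC u * hC u⁻¹ = 1 := by rw [hC_mul, mul_inv_cancel, hC_one]
  exact inv_eq_of_mul_eq_one_right this

lemma hC_neg_one_sq : hC (-1 : Aˣ) * hC (-1 : Aˣ) = 1 := by
  rw [hC_mul]; norm_num [hC_one]

lemma hC_neg_one_comm (a : A) : hC (-1) * epsC a = epsC a * hC (-1) := by
  have h := R3 (-1 : Aˣ) a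
  have h2 : ((((-1 : Aˣ) : A)) ^ 2 * a) = a := by norm_num
  rw [h2] at h
  calc hC (-1) * epsC a = (hC (-1) * epsC a * hC (-1)) * hC (-1) := by
        rw [mul_assoc, mul_assoc, hC_neg_one_sq, mul_one]
    _ = epsC a * hC (-1) := by rw [h]

lemma R3w0 (w : Aˣ) : hC w * epsC (0 : A) * hC w = epsC (0 : A) := by
  have h := R3 w 0
  rwa [mul_zero] at h

lemma yC_add (a b : A) : yC a * yC b = yC (a + b) := by
  simp only [yC, pow_succ, pow_zero, one_mul]
  calc epsC (0:A) * epsC 0 * epsC 0 * epsC a * (epsC 0 * epsC 0 * epsC 0 * epsC b)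
      = epsC (0:A) * epsC 0 * epsC 0 * epsC a * epsC 0 *
          (epsC 0 * epsC 0 * epsC b) := by group
    _ = epsC (0:A) * epsC 0 * epsC 0 * epsC a * epsC 0 * (hC (-1) * epsC b) := by
        have := R2 (0 : A) b; rw [zero_add] at this; rw [this]
    _ = epsC (0:A) * epsC 0 * epsC 0 * (epsC a * epsC 0 * epsC b) * hC (-1) := by
        rw [hC_neg_one_comm b]; group
    _ = epsC (0:A) * epsC 0 * epsC 0 * (hC (-1) * epsC (a + b)) * hC (-1) := by
        rw [R2 a b]
    _ = epsC (0:A) * epsC 0 * epsC 0 * epsC (a + b) * (hC (-1) * hC (-1)) := by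
        rw [hC_neg_one_comm (a + b)]; group
    _ = epsC (0:A) * epsC 0 * epsC 0 * epsC (a + b) := by
        rw [hC_neg_one_sq, mul_one]

lemma conjC (u : Aˣ) (a : A) :
    (hC u)⁻¹ * epsC a * hC u = hC u⁻¹ * hC u⁻¹ * epsC ((u : A) ^ 2 * a) := by
  have h : epsC a = (hC u)⁻¹ * epsC ((u : A) ^ 2 * a) * (hC u)⁻¹ := by
    rw [← R3 u a]; group
  have hcancel : hC u⁻¹ * hC u = 1 := by rw [hC_mul, inv_mul_cancel, hC_one]
  calc (hC u)⁻¹ * epsC a * hC u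
      = hC u⁻¹ * (hC u⁻¹ * epsC ((u : A) ^ 2 * a) * hC u⁻¹) * hC u := by
        rw [h, hC_inv]
    _ = hC u⁻¹ * hC u⁻¹ * epsC ((u : A) ^ 2 * a) * (hC u⁻¹ * hC u) := by group
    _ = hC u⁻¹ * hC u⁻¹ * epsC ((u : A) ^ 2 * a) := by rw [hcancel, mul_one]

lemma yC_conj (u : Aˣ) (a : A) :
    (hC u)⁻¹ * yC a * hC u = yC ((u : A) ^ 2 * a) := by
  set w : Aˣ := u⁻¹ * u⁻¹ with hw
  have hww : hC u⁻¹ * hC u⁻¹ = hC w := hC_mul _ _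
  have c0 : (hC u)⁻¹ * epsC (0 : A) * hC u = hC w * epsC 0 := by
    rw [conjC, hww, mul_zero]
  have ca : (hC u)⁻¹ * epsC a * hC u = hC w * epsC ((u : A) ^ 2 * a) := by
    rw [conjC, hww]
  have key : (hC u)⁻¹ * yC a * hC u =
      ((hC u)⁻¹ * epsC (0:A) * hC u) * ((hC u)⁻¹ * epsC (0:A) * hC u) *
      ((hC u)⁻¹ * epsC (0:A) * hC u) * ((hC u)⁻¹ * epsC a * hC u) := by
    simp only [yC, pow_succ, pow_zero, one_mul]; group
  rw [key, c0, ca]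
  calc hC w * epsC (0:A) * (hC w * epsC 0) * (hC w * epsC 0) *
        (hC w * epsC ((u : A) ^ 2 * a))
      = (hC w * epsC (0:A) * hC w) * epsC 0 *
          ((hC w * epsC 0 * hC w) * epsC ((u : A) ^ 2 * a)) := by group
    _ = epsC (0:A) * epsC 0 * (epsC 0 * epsC ((u : A) ^ 2 * a)) := by rw [R3w0]
    _ = yC ((u : A) ^ 2 * a) := by simp only [yC, pow_succ, pow_zero, one_mul]; group

end CohnLemmas

/-- In C(A): y(a)y(b) = y(a+b), and h(u)⁻¹ y(a) h(u) = y(u²a). -/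
theorem stmt11 (A : Type*) [CommRing A] :
    (∀ a b : A, yC a * yC b = yC (a + b)) ∧
    (∀ (u : Aˣ) (a : A), (hC u)⁻¹ * yC a * hC u = yC ((u : A) ^ 2 * a)) := by
  exact ⟨yC_add, yC_conj⟩
end

section
/- Let A be a commutative ring, a₁, …, aₙ ∈ A, and let Z = [[u,0],[c,u⁻¹]] be a lower-triangular matrix in SL₂(A) with (1,1)-entry the unit u. Define b₁ := a₁u² + cu and bᵢ := u^{(−1)^{i−1}·2} aᵢ for 2 ≤ i ≤ n. Then for every 1 ≤ i ≤ n, E(bᵢ)E(bᵢ₋₁)···E(b₁) = D(u)^{(−1)^{i−1}} E(aᵢ)E(aᵢ₋₁)···E(a₁) Z in SL₂(A), and b₁, …, bₙ are the unique elements of A with this property. -/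
open Matrix

/-- Given `f : A → G` and a tuple `(a 0, …, a (n-1))`, the product
`f (a (n-1)) * ⋯ * f (a 1) * f (a 0)` (rightmost factor first). -/
def wordProd {A : Type*} {G : Type*} [Monoid G] (f : A → G) :
    {n : ℕ} → (Fin n → A) → G
  | 0, _ => 1
  | n + 1, a => f (a (Fin.last n)) * wordProd f (fun j : Fin n => a j.castSucc)


/-- ℕ-indexed version of `wordProd`. -/
def wp {A : Type*} {G : Type*} [Monoid G] (f : A → G) (g : ℕ → A) : ℕ → G
  | 0 => 1
  | k + 1 => f (g k) * wp f g k

lemma wordProd_eq_wp {A : Type*} {G : Type*} [Monoid G] (f : A → G) (g : ℕ → A) :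
    ∀ (m : ℕ) (v : Fin m → A), (∀ j : Fin m, v j = g j.1) → wordProd f v = wp f g m := by
  intro m
  induction m with
  | zero => intro v _; rfl
  | succ m ih =>
    intro v hv
    show f (v (Fin.last m)) * wordProd f (fun j : Fin m => v j.castSucc) = f (g m) * wp f g m
    rw [hv (Fin.last m), ih (fun j : Fin m => v j.castSucc) (fun j => hv j.castSucc)]
    rfl

section aux
variable {A : Type*} [CommRing A]

lemma DSL_mul_DSL_inv (u : Aˣ) : DSL u * DSL u⁻¹ = 1 := by
  ext i j
  rw [Matrix.SpecialLinearGroup.coe_mul]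
  fin_cases i <;> fin_cases j <;>
    simp [DSL, Matrix.mul_apply, Fin.sum_univ_two]

lemma DSL_inv (u : Aˣ) : (DSL u)⁻¹ = DSL u⁻¹ :=
  inv_eq_of_mul_eq_one_right (DSL_mul_DSL_inv u)

lemma L2 (u : Aˣ) (x : A) : ESL ((u:A)^2 * x) * DSL u⁻¹ = DSL u * ESL x := by
  ext i j
  rw [Matrix.SpecialLinearGroup.coe_mul, Matrix.SpecialLinearGroup.coe_mul]
  fin_cases i <;> fin_cases j <;>
    simp [ESL, DSL, Matrix.mul_apply, Fin.sum_univ_two] <;>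
    linear_combination ((u:A) * x) * u.mul_inv

lemma L3 (u : Aˣ) (x : A) : ESL (((u⁻¹:Aˣ):A)^2 * x) * DSL u = DSL u⁻¹ * ESL x := by
  simpa using L2 u⁻¹ x

lemma L1 (u : Aˣ) (c x : A) (Z : Matrix.SpecialLinearGroup (Fin 2) A)
    (hZ : (Z : Matrix (Fin 2) (Fin 2) A) = !![(u : A), 0; c, ((u⁻¹ : Aˣ) : A)]) :
    ESL (x * (u:A)^2 + c * u) = DSL u * ESL x * Z := by
  ext i j
  rw [Matrix.SpecialLinearGroup.coe_mul, Matrix.SpecialLinearGroup.coe_mul]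
  fin_cases i <;> fin_cases j <;>
    simp [ESL, DSL, hZ, Matrix.mul_apply, Fin.sum_univ_two] <;>
    first
      | ring1
      | linear_combination u.mul_inv
      | linear_combination (-1 : A) * u.mul_inv

lemma ESL_inj {x y : A} (h : ESL x = ESL y) : x = y := by
  have := congrArg
    (fun M : Matrix.SpecialLinearGroup (Fin 2) A => (M : Matrix (Fin 2) (Fin 2) A) 0 0) h
  simpa [ESL] using this

lemma key (n : ℕ) (ga : ℕ → A) (u : Aˣ) (c : A)
    (Z : Matrix.SpecialLinearGroup (Fin 2) A)
    (hZ : (Z : Matrix (Fin 2) (Fin 2) A) = !![(u : A), 0; c, ((u⁻¹ : Aˣ) : A)])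
    (gb : ℕ → A)
    (hgb : ∀ k < n, gb k =
      if k = 0 then ga k * (u : A) ^ 2 + c * (u : A)
      else if Even k then (u : A) ^ 2 * ga k else ((u⁻¹ : Aˣ) : A) ^ 2 * ga k) :
    ∀ k < n, wp ESL gb (k + 1) =
        (DSL u) ^ ((-1 : ℤ) ^ k) * wp ESL ga (k + 1) * Z := by
  intro k
  induction k with
  | zero =>
    intro hk
    have hb0 := hgb 0 hk
    rw [if_pos rfl] at hb0
    show ESL (gb 0) * 1 = DSL u ^ ((-1:ℤ)^0) * (ESL (ga 0) * 1) * Z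
    rw [hb0, pow_zero, zpow_one, mul_one, mul_one]
    exact L1 u c _ Z hZ
  | succ k ih =>
    intro hk
    have hk' : k < n := Nat.lt_of_succ_lt hk
    have eIH := ih hk'
    have hbk := hgb (k + 1) hk
    show ESL (gb (k+1)) * wp ESL gb (k+1) = _
    rw [eIH]
    rcases Nat.even_or_odd (k + 1) with he | ho
    · have hko : Odd k := Nat.Even.sub_odd (Nat.le_add_left 1 k) he odd_one
      have hbk' : gb (k + 1) = (u : A) ^ 2 * ga (k + 1) := by
        simpa [Nat.succ_ne_zero, he] using hbk
      rw [hbk', hko.neg_one_pow, he.neg_one_pow, _root_.zpow_neg_one, zpow_one, DSL_inv,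
        ← mul_assoc, ← mul_assoc, L2]
      show DSL u * ESL (ga (k+1)) * wp ESL ga (k+1) * Z =
        DSL u * (ESL (ga (k+1)) * wp ESL ga (k+1)) * Z
      rw [mul_assoc (DSL u)]
    · have hke : Even k := by
        rcases ho with ⟨m, hm⟩; exact ⟨m, by omega⟩
      have hbk' : gb (k + 1) = ((u⁻¹ : Aˣ) : A) ^ 2 * ga (k + 1) := by
        simpa [Nat.succ_ne_zero, Nat.not_even_iff_odd.mpr ho] using hbk
      rw [hbk', hke.neg_one_pow, ho.neg_one_pow, zpow_one, _root_.zpow_neg_one, DSL_inv,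
        ← mul_assoc, ← mul_assoc, L3]
      show DSL u⁻¹ * ESL (ga (k+1)) * wp ESL ga (k+1) * Z =
        DSL u⁻¹ * (ESL (ga (k+1)) * wp ESL ga (k+1)) * Z
      rw [mul_assoc (DSL u⁻¹)]

end aux

/-- Let Z = [[u,0],[c,u⁻¹]] ∈ SL₂(A) be lower triangular with (1,1)-entry
the unit u, and let a₁,…,aₙ ∈ A.  With b₁ := a₁u² + cu and bᵢ := u^{(-1)^{i-1}·2}aᵢ for
i ≥ 2, one has E(bᵢ)⋯E(b₁) = D(u)^{(-1)^{i-1}} E(aᵢ)⋯E(a₁) Z for all 1 ≤ i ≤ n, and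
b₁,…,bₙ are the unique elements of A with this property.  (Indices here are 0-based:
`i : Fin n` corresponds to the (i+1)-st element.) -/
theorem stmt15 (A : Type*) [CommRing A] (n : ℕ) (a : Fin n → A) (u : Aˣ) (c : A)
    (Z : Matrix.SpecialLinearGroup (Fin 2) A)
    (hZ : (Z : Matrix (Fin 2) (Fin 2) A) = !![(u : A), 0; c, ((u⁻¹ : Aˣ) : A)])
    (b : Fin n → A)
    (hb : ∀ i : Fin n, b i =
      if i.1 = 0 then a i * (u : A) ^ 2 + c * (u : A)
      else if Even i.1 then (u : A) ^ 2 * a i else ((u⁻¹ : Aˣ) : A) ^ 2 * a i) :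
    (∀ i : Fin n,
      wordProd ESL (fun j : Fin (i.1 + 1) => b (Fin.castLE i.isLt j)) =
        (DSL u) ^ ((-1 : ℤ) ^ i.1) *
          wordProd ESL (fun j : Fin (i.1 + 1) => a (Fin.castLE i.isLt j)) * Z) ∧
    (∀ b' : Fin n → A,
      (∀ i : Fin n,
        wordProd ESL (fun j : Fin (i.1 + 1) => b' (Fin.castLE i.isLt j)) =
          (DSL u) ^ ((-1 : ℤ) ^ i.1) *
            wordProd ESL (fun j : Fin (i.1 + 1) => a (Fin.castLE i.isLt j)) * Z) →
      b' = b) := by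
  classical
  set ga : ℕ → A := fun k => if h : k < n then a ⟨k, h⟩ else 0 with hga
  set gb : ℕ → A := fun k => if h : k < n then b ⟨k, h⟩ else 0 with hgb
  have hgav : ∀ (i : Fin n) (j : Fin (i.1 + 1)), a (Fin.castLE i.isLt j) = ga j.1 := by
    intro i j
    simp only [hga, dif_pos (j.2.trans_le i.isLt)]
    rfl
  have hgbv : ∀ (b₀ : Fin n → A) (gb₀ : ℕ → A),
      gb₀ = (fun k => if h : k < n then b₀ ⟨k, h⟩ else 0) →
      ∀ (i : Fin n) (j : Fin (i.1 + 1)), b₀ (Fin.castLE i.isLt j) = gb₀ j.1 := by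
    intro b₀ gb₀ hdef i j
    simp only [hdef, dif_pos (j.2.trans_le i.isLt)]
    rfl
  have hrel : ∀ k < n, gb k =
      if k = 0 then ga k * (u : A) ^ 2 + c * (u : A)
      else if Even k then (u : A) ^ 2 * ga k else ((u⁻¹ : Aˣ) : A) ^ 2 * ga k := by
    intro k hk
    simp only [hga, hgb, dif_pos hk]
    exact hb ⟨k, hk⟩
  have K := key n ga u c Z hZ gb hrel
  constructor
  · intro i
    rw [wordProd_eq_wp ESL gb (i.1 + 1) _ (hgbv b gb hgb i),
      wordProd_eq_wp ESL ga (i.1 + 1) _ (hgav i)]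
    exact K i.1 i.isLt
  · intro b' h
    set gb' : ℕ → A := fun k => if h : k < n then b' ⟨k, h⟩ else 0 with hgb'
    have h' : ∀ k < n, wp ESL gb' (k + 1) = wp ESL gb (k + 1) := by
      intro k hk
      have h1 := h ⟨k, hk⟩
      rw [wordProd_eq_wp ESL gb' (k + 1) _ (hgbv b' gb' hgb' ⟨k, hk⟩),
        wordProd_eq_wp ESL ga (k + 1) _ (hgav ⟨k, hk⟩)] at h1
      exact h1.trans (K k hk).symm
    funext i
    obtain ⟨k, hk⟩ := i
    have hE : ESL (gb' k) = ESL (gb k) := by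
      match k, hk with
      | 0, hk =>
        have := h' 0 hk
        simpa [wp] using this
      | k + 1, hk =>
        have e1 := h' k (Nat.lt_of_succ_lt hk)
        have e2 : ESL (gb' (k + 1)) * wp ESL gb' (k + 1) =
            ESL (gb (k + 1)) * wp ESL gb (k + 1) := h' (k + 1) hk
        rw [e1] at e2
        exact mul_right_cancel e2
    have := ESL_inj hE
    simpa [hgb', hgb, dif_pos hk] using this
end
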